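/- Let ξ₁ and ξ₂ be real random variables on a common probability space (not assumed independent), with ξ_i subgaussian of order σ_i², σ_i > 0, for i = 1, 2. Then E[e^{γ ξ₁ ξ₂}] ≤ 3 for every γ with 0 < γ ≤ 1/(4 σ₁ σ₂). -/

import Mathlib

open MeasureTheory Real

/-- A real random variable `ξ` is subgaussian of order `σ²` if
`log E[e^{θξ}] ≤ σ²θ²/2` for every `θ ∈ ℝ`. -/
def Subgaussian {Ω : Type*} [MeasurableSpace Ω] (μ : Measure Ω) (ξ : Ω → ℝ) (σ2 : ℝ) : Prop :=
  ∀ θ : ℝ, ∫⁻ a, ENNReal.ofReal (Real.exp (θ * ξ a)) ∂μ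
    ≤ ENNReal.ofReal (Real.exp (σ2 * θ ^ 2 / 2))

/-- Lintegral form of the Gaussian integral. -/
lemma lintegral_gauss (b : ℝ) (hb : 0 < b) :
    ∫⁻ t : ℝ, ENNReal.ofReal (Real.exp (-b * t ^ 2)) = ENNReal.ofReal (Real.sqrt (π / b)) := by
  rw [← ofReal_integral_eq_lintegral_ofReal (integrable_exp_neg_mul_sq hb)
    (Filter.Eventually.of_forall fun x => (exp_pos _).le), integral_gaussian]

lemma gauss_moment {Ω : Type*} [MeasurableSpace Ω] (μ : Measure Ω) [IsProbabilityMeasure μ]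
    (ξ : Ω → ℝ) (hξ : Measurable ξ) (σ : ℝ) (hσ : 0 < σ)
    (hsub : Subgaussian μ ξ (σ ^ 2)) :
    ∫⁻ a, ENNReal.ofReal (Real.exp (ξ a ^ 2 / (4 * σ ^ 2))) ∂μ
      ≤ ENNReal.ofReal (Real.sqrt 2) := by
  have hσ2 : (0:ℝ) < σ ^ 2 := by positivity
  set K : ENNReal := ENNReal.ofReal (Real.sqrt (π / σ ^ 2)) with hK
  have hK0 : K ≠ 0 := by
    simp only [hK, ne_eq, ENNReal.ofReal_eq_zero, not_le]
    positivity
  have hKt : K ≠ ⊤ := ENNReal.ofReal_ne_top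
  -- pointwise Gaussian representation
  have key : ∀ x : ℝ,
      ENNReal.ofReal (Real.exp (x ^ 2 / (4 * σ ^ 2))) * K
        = ∫⁻ t : ℝ, ENNReal.ofReal (Real.exp (x * t - σ ^ 2 * t ^ 2)) := by
    intro x
    have hexp : ∀ t : ℝ, x * t - σ ^ 2 * t ^ 2
        = x ^ 2 / (4 * σ ^ 2) + (-(σ ^ 2) * (t - x / (2 * σ ^ 2)) ^ 2) := by
      intro t; field_simp; ring
    calc ENNReal.ofReal (Real.exp (x ^ 2 / (4 * σ ^ 2))) * K
        = ENNReal.ofReal (Real.exp (x ^ 2 / (4 * σ ^ 2)))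
            * ∫⁻ t : ℝ, ENNReal.ofReal (Real.exp (-(σ ^ 2) * t ^ 2)) := by
          rw [hK, lintegral_gauss _ hσ2]
      _ = ENNReal.ofReal (Real.exp (x ^ 2 / (4 * σ ^ 2)))
            * ∫⁻ t : ℝ, ENNReal.ofReal (Real.exp (-(σ ^ 2) * (t - x / (2 * σ ^ 2)) ^ 2)) := by
          rw [lintegral_sub_right_eq_self
            (fun t : ℝ => ENNReal.ofReal (Real.exp (-(σ ^ 2) * t ^ 2))) (x / (2 * σ ^ 2))]
      _ = ∫⁻ t : ℝ, ENNReal.ofReal (Real.exp (x * t - σ ^ 2 * t ^ 2)) := by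
          rw [← lintegral_const_mul]
          · refine lintegral_congr fun t => ?_
            rw [hexp t, Real.exp_add, ENNReal.ofReal_mul (exp_pos _).le]
          · exact (ENNReal.measurable_ofReal.comp
              (Real.measurable_exp.comp ((measurable_const.mul
                (((measurable_id.sub measurable_const)).pow_const 2)))))
  -- main estimate after multiplying by K
  have hmeas : Measurable (Function.uncurry fun (a : Ω) (t : ℝ) =>
      ENNReal.ofReal (Real.exp (ξ a * t - σ ^ 2 * t ^ 2))) := by
    apply ENNReal.measurable_ofReal.comp
    apply Real.measurable_exp.comp
    exact ((hξ.comp measurable_fst).mul measurable_snd).sub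
      (measurable_const.mul (measurable_snd.pow_const 2))
  have main : (∫⁻ a, ENNReal.ofReal (Real.exp (ξ a ^ 2 / (4 * σ ^ 2))) ∂μ) * K
      ≤ ENNReal.ofReal (Real.sqrt 2) * K := by
    calc (∫⁻ a, ENNReal.ofReal (Real.exp (ξ a ^ 2 / (4 * σ ^ 2))) ∂μ) * K
        = ∫⁻ a, ENNReal.ofReal (Real.exp (ξ a ^ 2 / (4 * σ ^ 2))) * K ∂μ := by
          exact (lintegral_mul_const'' K (f := fun a => ENNReal.ofReal
            (Real.exp (ξ a ^ 2 / (4 * σ ^ 2)))) ((ENNReal.measurable_ofReal.comp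
            (Real.measurable_exp.comp ((hξ.pow_const 2).div_const _))).aemeasurable)).symm
      _ = ∫⁻ a, (∫⁻ t : ℝ, ENNReal.ofReal (Real.exp (ξ a * t - σ ^ 2 * t ^ 2))) ∂μ := by
          exact lintegral_congr fun a => key (ξ a)
      _ = ∫⁻ t : ℝ, (∫⁻ a, ENNReal.ofReal (Real.exp (ξ a * t - σ ^ 2 * t ^ 2)) ∂μ) := by
          exact lintegral_lintegral_swap hmeas.aemeasurable
      _ ≤ ∫⁻ t : ℝ, ENNReal.ofReal (Real.exp (-(σ ^ 2 / 2) * t ^ 2)) := by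
          refine lintegral_mono fun t => ?_
          have h1 : (∫⁻ a, ENNReal.ofReal (Real.exp (ξ a * t - σ ^ 2 * t ^ 2)) ∂μ)
              = (∫⁻ a, ENNReal.ofReal (Real.exp (t * ξ a)) ∂μ)
                * ENNReal.ofReal (Real.exp (-(σ ^ 2) * t ^ 2)) := by
            rw [← lintegral_mul_const'' (ENNReal.ofReal (Real.exp (-(σ ^ 2) * t ^ 2)))
              (f := fun a => ENNReal.ofReal (Real.exp (t * ξ a)))
              ((ENNReal.measurable_ofReal.comp
              (Real.measurable_exp.comp (measurable_const.mul hξ))).aemeasurable)]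
            refine lintegral_congr fun a => ?_
            rw [← ENNReal.ofReal_mul (exp_pos _).le, ← Real.exp_add]
            ring_nf
          rw [h1]
          calc (∫⁻ a, ENNReal.ofReal (Real.exp (t * ξ a)) ∂μ)
                * ENNReal.ofReal (Real.exp (-(σ ^ 2) * t ^ 2))
              ≤ ENNReal.ofReal (Real.exp (σ ^ 2 * t ^ 2 / 2))
                * ENNReal.ofReal (Real.exp (-(σ ^ 2) * t ^ 2)) :=
                mul_le_mul_left (hsub t) _
            _ = ENNReal.ofReal (Real.exp (-(σ ^ 2 / 2) * t ^ 2)) := by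
                rw [← ENNReal.ofReal_mul (exp_pos _).le, ← Real.exp_add]
                ring_nf
      _ = ENNReal.ofReal (Real.sqrt 2) * K := by
          rw [lintegral_gauss _ (by positivity), hK,
            ← ENNReal.ofReal_mul (Real.sqrt_nonneg _)]
          congr 1
          rw [← Real.sqrt_mul (by norm_num : (0:ℝ) ≤ 2)]
          congr 1
          field_simp
  exact (ENNReal.mul_le_mul_iff_left hK0 hKt).mp main

/-- Lemma H.2.2: if `ξ₁, ξ₂` are subgaussian of orders `σ₁², σ₂²` (not assumed independent),
then `E[e^{γ ξ₁ ξ₂}] ≤ 3` for every `0 < γ ≤ 1/(4σ₁σ₂)`. -/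
theorem subgaussian_exp_product {Ω : Type*} [MeasurableSpace Ω]
    (μ : Measure Ω) [IsProbabilityMeasure μ]
    (ξ₁ ξ₂ : Ω → ℝ) (hξ₁ : Measurable ξ₁) (hξ₂ : Measurable ξ₂)
    (σ₁ σ₂ : ℝ) (hσ₁ : 0 < σ₁) (hσ₂ : 0 < σ₂)
    (hsub₁ : Subgaussian μ ξ₁ (σ₁ ^ 2)) (hsub₂ : Subgaussian μ ξ₂ (σ₂ ^ 2))
    (γ : ℝ) (hγ0 : 0 < γ) (hγ : γ ≤ 1 / (4 * σ₁ * σ₂)) :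
    ∫⁻ a, ENNReal.ofReal (Real.exp (γ * ξ₁ a * ξ₂ a)) ∂μ ≤ 3 := by
  have hpt : ∀ a, ENNReal.ofReal (Real.exp (γ * ξ₁ a * ξ₂ a))
      ≤ ENNReal.ofReal (Real.exp (ξ₁ a ^ 2 / (4 * σ₁ ^ 2)))
        + ENNReal.ofReal (Real.exp (ξ₂ a ^ 2 / (4 * σ₂ ^ 2))) := by
    intro a
    set x := ξ₁ a; set y := ξ₂ a
    have hxy : γ * x * y ≤ x ^ 2 / (8 * σ₁ ^ 2) + y ^ 2 / (8 * σ₂ ^ 2) := by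
      have h1 : γ * x * y ≤ γ * |x * y| := by
        calc γ * x * y = γ * (x * y) := by ring
          _ ≤ γ * |x * y| := by nlinarith [le_abs_self (x * y), hγ0.le]
      have h2 : |x * y| * (1 / (4 * σ₁ * σ₂)) ≤ x ^ 2 / (8 * σ₁ ^ 2) + y ^ 2 / (8 * σ₂ ^ 2) := by
        rw [abs_mul]
        have hx := abs_nonneg x; have hy := abs_nonneg y
        have hsx : |x| ^ 2 = x ^ 2 := sq_abs x
        have hsy : |y| ^ 2 = y ^ 2 := sq_abs y
        have h5 : 2 * (σ₁ * σ₂) * (|x| * |y|) ≤ σ₂ ^ 2 * x ^ 2 + σ₁ ^ 2 * y ^ 2 := by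
          rw [← abs_mul]
          rcases abs_cases (x * y) with ⟨h, _⟩ | ⟨h, _⟩ <;> rw [h] <;>
            nlinarith [sq_nonneg (x * σ₂ - y * σ₁), sq_nonneg (x * σ₂ + y * σ₁)]
        have h4 : |x| * |y| / (4 * σ₁ * σ₂) ≤ x ^ 2 / (8 * σ₁ ^ 2) + y ^ 2 / (8 * σ₂ ^ 2) := by
          rw [div_add_div _ _ (by positivity) (by positivity),
            div_le_div_iff₀ (by positivity) (by positivity)]
          nlinarith [mul_le_mul_of_nonneg_left h5 (by positivity : (0:ℝ) ≤ 16 * σ₁ * σ₂)]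
        calc |x| * |y| * (1 / (4 * σ₁ * σ₂)) = |x| * |y| / (4 * σ₁ * σ₂) := by ring
          _ ≤ _ := h4
      have h3 : γ * |x * y| ≤ |x * y| * (1 / (4 * σ₁ * σ₂)) := by
        rw [mul_comm]
        exact mul_le_mul_of_nonneg_left hγ (abs_nonneg _)
      linarith
    have hsum : Real.exp (γ * x * y)
        ≤ Real.exp (x ^ 2 / (4 * σ₁ ^ 2)) + Real.exp (y ^ 2 / (4 * σ₂ ^ 2)) := by
      set a1 := x ^ 2 / (8 * σ₁ ^ 2)
      set b1 := y ^ 2 / (8 * σ₂ ^ 2)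
      have ha1 : 0 ≤ a1 := by positivity
      have hb1 : 0 ≤ b1 := by positivity
      have h2a : x ^ 2 / (4 * σ₁ ^ 2) = 2 * a1 := by simp only [a1]; ring
      have h2b : y ^ 2 / (4 * σ₂ ^ 2) = 2 * b1 := by simp only [b1]; ring
      rw [h2a, h2b]
      have := Real.exp_le_exp.mpr hxy
      rcases le_total a1 b1 with h | h
      · have : Real.exp (a1 + b1) ≤ Real.exp (2 * b1) :=
          Real.exp_le_exp.mpr (by linarith)
        linarith [Real.exp_pos (2 * a1), Real.exp_le_exp.mpr hxy]
      · have : Real.exp (a1 + b1) ≤ Real.exp (2 * a1) :=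
          Real.exp_le_exp.mpr (by linarith)
        linarith [Real.exp_pos (2 * b1), Real.exp_le_exp.mpr hxy]
    calc ENNReal.ofReal (Real.exp (γ * x * y))
        ≤ ENNReal.ofReal (Real.exp (x ^ 2 / (4 * σ₁ ^ 2)) + Real.exp (y ^ 2 / (4 * σ₂ ^ 2))) :=
          ENNReal.ofReal_le_ofReal hsum
      _ = _ := ENNReal.ofReal_add (exp_pos _).le (exp_pos _).le
  calc ∫⁻ a, ENNReal.ofReal (Real.exp (γ * ξ₁ a * ξ₂ a)) ∂μ
      ≤ ∫⁻ a, (ENNReal.ofReal (Real.exp (ξ₁ a ^ 2 / (4 * σ₁ ^ 2)))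
          + ENNReal.ofReal (Real.exp (ξ₂ a ^ 2 / (4 * σ₂ ^ 2)))) ∂μ :=
        lintegral_mono hpt
    _ = (∫⁻ a, ENNReal.ofReal (Real.exp (ξ₁ a ^ 2 / (4 * σ₁ ^ 2))) ∂μ)
        + ∫⁻ a, ENNReal.ofReal (Real.exp (ξ₂ a ^ 2 / (4 * σ₂ ^ 2))) ∂μ :=
        lintegral_add_left (ENNReal.measurable_ofReal.comp
          (Real.measurable_exp.comp ((hξ₁.pow_const 2).div_const _))) _
    _ ≤ ENNReal.ofReal (Real.sqrt 2) + ENNReal.ofReal (Real.sqrt 2) :=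
        add_le_add (gauss_moment μ ξ₁ hξ₁ σ₁ hσ₁ hsub₁) (gauss_moment μ ξ₂ hξ₂ σ₂ hσ₂ hsub₂)
    _ ≤ 3 := by
        rw [← ENNReal.ofReal_add (Real.sqrt_nonneg _) (Real.sqrt_nonneg _)]
        refine le_trans (ENNReal.ofReal_le_ofReal ?_) (by norm_num : ENNReal.ofReal 3 ≤ 3)
        have : Real.sqrt 2 ≤ 1.5 := by
          rw [show (1.5:ℝ) = Real.sqrt (1.5 ^ 2) by rw [Real.sqrt_sq]; norm_num]
          exact Real.sqrt_le_sqrt (by norm_num)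
        linarith
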